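/- In a discrete median algebra, the function d(x,y) := |Δ(x,y)| (number of half spaces containing x but not y) is a metric, and it agrees with the path metric of the median graph ΓM in which x,y are adjacent iff [x,y]={x,y}. -/
import Mathlib


/-- A median algebra: a set with a ternary median operation satisfying (Med 1)-(Med 3). -/
structure MedianAlgebra (M : Type*) where
  m : M → M → M → M
  comm₁ : ∀ x y z, m x y z = m x z y
  comm₂ : ∀ x y z, m x y z = m y z x
  idem : ∀ x y, m x x y = x
  assoc : ∀ x y z u v, m (m x y z) u v = m x (m y u v) (m z u v)

namespace MedianAlgebra

variable {M : Type*}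

/-- The interval `[x,y] = {z | z = m x y z}`. -/
def I (A : MedianAlgebra M) (x y : M) : Set M := {z | z = A.m x y z}

/-- A subset is convex if it contains the interval between any two of its points. -/
def Conv (A : MedianAlgebra M) (C : Set M) : Prop :=
  ∀ x ∈ C, ∀ y ∈ C, A.I x y ⊆ C

/-- A half space is a convex set with convex complement. -/
def Halfspace (A : MedianAlgebra M) (H : Set M) : Prop :=
  A.Conv H ∧ A.Conv Hᶜ

/-- The convex hull of a set: the intersection of all convex sets containing it. -/
def hull (A : MedianAlgebra M) (X : Set M) : Set M :=
  ⋂₀ {C | A.Conv C ∧ X ⊆ C}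

/-- The separator `Δ(X,Y)`: half spaces containing `X` and disjoint from `Y`. -/
def sep (A : MedianAlgebra M) (X Y : Set M) : Set (Set M) :=
  {H | A.Halfspace H ∧ X ⊆ H ∧ Y ⊆ Hᶜ}

end MedianAlgebra

/-- Adjacency in the median graph: `x ≠ y` and `[x,y] = {x,y}`. -/
def MedianAlgebra.Adj {M : Type*} (A : MedianAlgebra M) (x y : M) : Prop :=
  x ≠ y ∧ A.I x y = {x, y}

/-! ### Auxiliary equational theory of median algebras -/

namespace MedianAlgebra

variable {M : Type*} (A : MedianAlgebra M)

theorem congr_m1 (b c : M) {a a' : M} (h : a = a') : A.m a b c = A.m a' b c := by rw [h]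
theorem congr_m2 (a c : M) {b b' : M} (h : b = b') : A.m a b c = A.m a b' c := by rw [h]
theorem congr_m3 (a b : M) {c c' : M} (h : c = c') : A.m a b c = A.m a b c' := by rw [h]

theorem m213 (x y z : M) : A.m x y z = A.m y x z := by rw [A.comm₂, A.comm₁]

theorem mxyx (x y : M) : A.m x y x = x := by rw [A.comm₁, A.idem]

theorem mxyy (x y : M) : A.m x y y = y := by rw [A.comm₂, A.idem]

/-- `m x y z` absorbed in `[x,y]`. -/
theorem absEq (x y z : M) : A.m x y (A.m x y z) = A.m x y z :=
  calc A.m x y (A.m x y z) = A.m (A.m x y z) x y := ((A.comm₂ (A.m x y z) x y)).symm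
    _ = A.m (A.m z x y) x y := (A.congr_m1 x y ((A.comm₂ z x y)).symm)
    _ = A.m z (A.m x x y) (A.m y x y) := (A.assoc z x y x y)
    _ = A.m z x (A.m y x y) := (A.congr_m2 z (A.m y x y) (A.idem x y))
    _ = A.m z x (A.m y y x) := (A.congr_m3 z x (A.comm₁ y x y))
    _ = A.m z x y := (A.congr_m3 z x (A.idem y x))
    _ = A.m x y z := (((A.comm₂ z x y)).symm).symm

theorem med13 (x y z : M) : A.m x z (A.m x y z) = A.m x y z :=
  calc A.m x z (A.m x y z) = A.m (A.m x y z) x z := ((A.comm₂ (A.m x y z) x z)).symm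
    _ = A.m (A.m y z x) x z := (A.congr_m1 x z (A.comm₂ x y z))
    _ = A.m y (A.m z x z) (A.m x x z) := (A.assoc y z x x z)
    _ = A.m y (A.m z z x) (A.m x x z) := (A.congr_m2 y (A.m x x z) (A.comm₁ z x z))
    _ = A.m y z (A.m x x z) := (A.congr_m2 y (A.m x x z) (A.idem z x))
    _ = A.m y z x := (A.congr_m3 y z (A.idem x z))
    _ = A.m x y z := ((A.comm₂ x y z)).symm

theorem med23 (x y z : M) : A.m y z (A.m x y z) = A.m x y z :=
  calc A.m y z (A.m x y z) = A.m (A.m x y z) y z := ((A.comm₂ (A.m x y z) y z)).symm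
    _ = A.m x (A.m y y z) (A.m z y z) := (A.assoc x y z y z)
    _ = A.m x y (A.m z y z) := (A.congr_m2 x (A.m z y z) (A.idem y z))
    _ = A.m x y (A.m z z y) := (A.congr_m3 x y (A.comm₁ z y z))
    _ = A.m x y z := (A.congr_m3 x y (A.idem z y))

/-- Interval transitivity, equational form. -/
theorem transIeq (x y z w : M) (hz : z = A.m x y z) (hw : w = A.m x z w) :
    w = A.m x y w :=
  calc w = A.m x z w := hw
    _ = A.m w x z := ((A.comm₂ w x z)).symm
    _ = A.m w x (A.m x y z) := (A.congr_m3 w x hz)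
    _ = A.m w x (A.m z x y) := (A.congr_m3 w x ((A.comm₂ z x y)).symm)
    _ = A.m w (A.m x x y) (A.m z x y) := ((A.congr_m2 w (A.m z x y) (A.idem x y))).symm
    _ = A.m (A.m w x z) x y := ((A.assoc w x z x y)).symm
    _ = A.m (A.m x z w) x y := ((A.congr_m1 x y ((A.comm₂ w x z)).symm)).symm
    _ = A.m w x y := ((A.congr_m1 x y hw)).symm
    _ = A.m x y w := (((A.comm₂ w x y)).symm).symm

/-- Uniqueness of the median. -/
theorem Ueq (x y z t : M) (h1 : t = A.m x y t) (h2 : t = A.m y z t)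
    (h3 : t = A.m z x t) : t = A.m x y z :=
  calc t = A.m x y t := h1
    _ = A.m t x y := ((A.comm₂ t x y)).symm
    _ = A.m (A.m y z t) x y := (A.congr_m1 x y h2)
    _ = A.m y (A.m z x y) (A.m t x y) := (A.assoc y z t x y)
    _ = A.m y (A.m y z x) (A.m t x y) := (A.congr_m2 y (A.m t x y) ((A.comm₂ y z x)).symm)
    _ = A.m y (A.m y z x) (A.m x y t) := (A.congr_m3 y (A.m y z x) (A.comm₂ t x y))
    _ = A.m y (A.m y z x) t := (A.congr_m3 y (A.m y z x) (h1).symm)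
    _ = A.m y (A.m y z x) (A.m z x t) := (A.congr_m3 y (A.m y z x) h3)
    _ = A.m y (A.m y z x) (A.m t z x) := (A.congr_m3 y (A.m y z x) ((A.comm₂ t z x)).symm)
    _ = A.m (A.m y y t) z x := ((A.assoc y y t z x)).symm
    _ = A.m y z x := (A.congr_m1 z x (A.idem y t))
    _ = A.m x y z := ((A.comm₂ x y z)).symm

/-- Gate property: if `t ∈ [x,y]` then `m x y z ∈ [z,t]`. -/
theorem Geq (x y z t : M) (ht : t = A.m x y t) :
    A.m x y z = A.m z t (A.m x y z) := by
  have g1 : A.m (A.m x y z) t z = A.m x (A.m x y z) (A.m (A.m x y z) t z) :=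
    calc A.m (A.m x y z) t z = A.m z (A.m x y z) t := ((A.comm₂ z (A.m x y z) t)).symm
      _ = A.m z (A.m z x y) t := (A.congr_m2 z t ((A.comm₂ z x y)).symm)
      _ = A.m z (A.m z x y) (A.m x y t) := (A.congr_m3 z (A.m z x y) ht)
      _ = A.m z (A.m z x y) (A.m t x y) := (A.congr_m3 z (A.m z x y) ((A.comm₂ t x y)).symm)
      _ = A.m (A.m z z t) x y := ((A.assoc z z t x y)).symm
      _ = A.m z x y := (A.congr_m1 x y (A.idem z t))
      _ = A.m z (A.m x x (A.m x z t)) y := ((A.congr_m2 z y (A.idem x (A.m x z t)))).symm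
      _ = A.m (A.m x x (A.m x z t)) y z := (((A.comm₂ z (A.m x x (A.m x z t)) y)).symm).symm
      _ = A.m x (A.m x y z) (A.m (A.m x z t) y z) := (((A.assoc x x (A.m x z t) y z)).symm).symm
      _ = A.m x (A.m x y z) (A.m (A.m x z t) y (A.m z z t)) := ((A.congr_m3 x (A.m x y z) (A.congr_m3 (A.m x z t) y (A.idem z t)))).symm
      _ = A.m x (A.m x y z) (A.m y (A.m z z t) (A.m x z t)) := ((A.congr_m3 x (A.m x y z) ((A.comm₂ (A.m x z t) y (A.m z z t))).symm)).symm
      _ = A.m x (A.m x y z) (A.m (A.m y z x) z t) := ((A.congr_m3 x (A.m x y z) (A.assoc y z x z t))).symm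
      _ = A.m x (A.m x y z) (A.m (A.m x y z) z t) := ((A.congr_m3 x (A.m x y z) (A.congr_m1 z t (A.comm₂ x y z)))).symm
      _ = A.m x (A.m x y z) (A.m (A.m x y z) t z) := ((A.congr_m3 x (A.m x y z) (A.comm₁ (A.m x y z) t z))).symm
  have g2 : A.m (A.m x y z) t z = A.m y (A.m x y z) (A.m (A.m x y z) t z) :=
    calc A.m (A.m x y z) t z = A.m z (A.m x y z) t := ((A.comm₂ z (A.m x y z) t)).symm
      _ = A.m z (A.m z x y) t := (A.congr_m2 z t ((A.comm₂ z x y)).symm)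
      _ = A.m z (A.m z x y) (A.m x y t) := (A.congr_m3 z (A.m z x y) ht)
      _ = A.m z (A.m z x y) (A.m t x y) := (A.congr_m3 z (A.m z x y) ((A.comm₂ t x y)).symm)
      _ = A.m (A.m z z t) x y := ((A.assoc z z t x y)).symm
      _ = A.m z x y := (A.congr_m1 x y (A.idem z t))
      _ = A.m z x (A.m y y (A.m y z t)) := ((A.congr_m3 z x (A.idem y (A.m y z t)))).symm
      _ = A.m (A.m y y (A.m y z t)) z x := ((A.comm₂ (A.m y y (A.m y z t)) z x)).symm
      _ = A.m y (A.m y z x) (A.m (A.m y z t) z x) := (((A.assoc y y (A.m y z t) z x)).symm).symm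
      _ = A.m y (A.m y z x) (A.m (A.m y z t) (A.m z z t) x) := ((A.congr_m3 y (A.m y z x) (A.congr_m2 (A.m y z t) x (A.idem z t)))).symm
      _ = A.m y (A.m y z x) (A.m x (A.m y z t) (A.m z z t)) := ((A.congr_m3 y (A.m y z x) (A.comm₂ x (A.m y z t) (A.m z z t)))).symm
      _ = A.m y (A.m y z x) (A.m (A.m x y z) z t) := ((A.congr_m3 y (A.m y z x) (A.assoc x y z z t))).symm
      _ = A.m y (A.m y z x) (A.m (A.m x y z) t z) := ((A.congr_m3 y (A.m y z x) (A.comm₁ (A.m x y z) t z))).symm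
      _ = A.m y (A.m x y z) (A.m (A.m x y z) t z) := ((A.congr_m2 y (A.m (A.m x y z) t z) (A.comm₂ x y z))).symm
  have g3 : A.m (A.m x y z) t z = A.m z (A.m x y z) (A.m (A.m x y z) t z) :=
    calc A.m (A.m x y z) t z
        = A.m (A.m x y z) z (A.m (A.m x y z) t z) := (A.med13 (A.m x y z) t z).symm
      _ = A.m z (A.m x y z) (A.m (A.m x y z) t z) := A.m213 (A.m x y z) z (A.m (A.m x y z) t z)
  have hXxy : A.m (A.m x y z) t z = A.m x y (A.m (A.m x y z) t z) :=
    A.transIeq x y (A.m x y z) (A.m (A.m x y z) t z) (A.absEq x y z).symm g1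
  have hXyz : A.m (A.m x y z) t z = A.m y z (A.m (A.m x y z) t z) :=
    A.transIeq y z (A.m x y z) (A.m (A.m x y z) t z) (A.med23 x y z).symm g2
  have hzx : A.m x y z = A.m z x (A.m x y z) := by
    calc A.m x y z = A.m x z (A.m x y z) := (A.med13 x y z).symm
      _ = A.m z x (A.m x y z) := A.m213 x z (A.m x y z)
  have hXzx : A.m (A.m x y z) t z = A.m z x (A.m (A.m x y z) t z) :=
    A.transIeq z x (A.m x y z) (A.m (A.m x y z) t z) hzx g3
  have hXg : A.m (A.m x y z) t z = A.m x y z :=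
    A.Ueq x y z (A.m (A.m x y z) t z) hXxy hXyz hXzx
  calc A.m x y z = A.m (A.m x y z) t z := (hXg).symm
    _ = A.m (A.m x y z) z t := (A.comm₁ (A.m x y z) t z)
    _ = A.m z t (A.m x y z) := (((A.comm₂ (A.m x y z) z t)).symm).symm

/-- Antisymmetry of betweenness. -/
theorem ASeq (u z p : M) (h1 : p = A.m u z p) (h2 : z = A.m u p z) : p = z :=
  calc p = A.m u z p := h1
    _ = A.m u p z := (A.comm₁ u z p)
    _ = z := (h2).symm

theorem T2eq (u v z q : M) (h1 : z = A.m u v z) (h2 : q = A.m z v q) :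
    z = A.m u q z :=
  calc z = A.m u v z := h1
    _ = A.m v z u := (A.comm₂ u v z)
    _ = A.m (A.m v z u) (A.m v z u) (A.m q z u) := ((A.idem (A.m v z u) (A.m q z u))).symm
    _ = A.m (A.m u v z) (A.m v z u) (A.m q z u) := ((A.congr_m1 (A.m v z u) (A.m q z u) (A.comm₂ u v z))).symm
    _ = A.m z (A.m v z u) (A.m q z u) := ((A.congr_m1 (A.m v z u) (A.m q z u) h1)).symm
    _ = A.m (A.m z v q) z u := ((A.assoc z v q z u)).symm
    _ = A.m q z u := ((A.congr_m1 z u h2)).symm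
    _ = A.m u q z := ((A.comm₂ u q z)).symm

/-- Convexity of intervals, equational form. -/
theorem IconvEq (x y u w t : M) (hu : u = A.m x y u) (hw : w = A.m x y w)
    (ht : t = A.m u w t) : t = A.m x y t := by
  have hT : A.m x y t = A.m u w (A.m x y t) :=
    calc A.m x y t = A.m t x y := ((A.comm₂ t x y)).symm
      _ = A.m (A.m u w t) x y := (A.congr_m1 x y ht)
      _ = A.m u (A.m w x y) (A.m t x y) := (A.assoc u w t x y)
      _ = A.m u (A.m x y w) (A.m t x y) := (A.congr_m2 u (A.m t x y) (A.comm₂ w x y))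
      _ = A.m u (A.m x y w) (A.m x y t) := ((A.congr_m3 u (A.m x y w) ((A.comm₂ t x y)).symm)).symm
      _ = A.m u w (A.m x y t) := ((A.congr_m2 u (A.m x y t) hw)).symm
  have hTu : A.m x y t = A.m t u (A.m x y t) := A.Geq x y t u hu
  have hTw : A.m x y t = A.m t w (A.m x y t) := A.Geq x y t w hw
  have hTwt : A.m x y t = A.m w t (A.m x y t) :=
    hTw.trans (A.m213 t w (A.m x y t))
  have hfin : A.m x y t = A.m u w t := A.Ueq u w t (A.m x y t) hT hTwt hTu
  exact ht.trans hfin.symm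

/-- `y ∈ [a,c]` implies `y ∈ [a, m c d y]`. -/
theorem Veq (a c d y : M) (h : y = A.m a c y) : y = A.m a (A.m c d y) y := by
  have v1 : A.m a (A.m c d y) y = A.m a c (A.m a (A.m c d y) y) :=
    calc A.m a (A.m c d y) y = A.m (A.m c d y) y a := (A.comm₂ a (A.m c d y) y)
      _ = A.m (A.m c d y) (A.m a c y) a := (A.congr_m2 (A.m c d y) a h)
      _ = A.m (A.m c d y) (A.m y a c) a := (A.congr_m2 (A.m c d y) a ((A.comm₂ y a c)).symm)
      _ = A.m (A.m c d y) (A.m y a c) (A.m a a c) := ((A.congr_m3 (A.m c d y) (A.m y a c) (A.idem a c))).symm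
      _ = A.m (A.m (A.m c d y) y a) a c := ((A.assoc (A.m c d y) y a a c)).symm
      _ = A.m (A.m a (A.m c d y) y) a c := ((A.congr_m1 a c (A.comm₂ a (A.m c d y) y))).symm
      _ = A.m a c (A.m a (A.m c d y) y) := (((A.comm₂ (A.m a (A.m c d y) y) a c)).symm).symm
  have v2 : A.m a (A.m c d y) y = A.m c y (A.m a (A.m c d y) y) :=
    calc A.m a (A.m c d y) y = A.m (A.m c d y) y a := (A.comm₂ a (A.m c d y) y)
      _ = A.m c (A.m d y a) (A.m y y a) := (A.assoc c d y y a)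
      _ = A.m (A.m d y a) (A.m y y a) c := (A.comm₂ c (A.m d y a) (A.m y y a))
      _ = A.m (A.m y a d) (A.m y y a) c := (A.congr_m1 (A.m y y a) c (A.comm₂ d y a))
      _ = A.m (A.m y a d) y c := (A.congr_m2 (A.m y a d) c (A.idem y a))
      _ = A.m y (A.m a y c) (A.m d y c) := (A.assoc y a d y c)
      _ = A.m (A.m d y c) y (A.m a y c) := ((A.comm₂ (A.m d y c) y (A.m a y c))).symm
      _ = A.m (A.m c d y) y (A.m a y c) := (A.congr_m1 y (A.m a y c) ((A.comm₂ c d y)).symm)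
      _ = A.m (A.m c d y) (A.m y y c) (A.m a y c) := ((A.congr_m2 (A.m c d y) (A.m a y c) (A.idem y c))).symm
      _ = A.m (A.m (A.m c d y) y a) y c := ((A.assoc (A.m c d y) y a y c)).symm
      _ = A.m (A.m a (A.m c d y) y) y c := ((A.congr_m1 y c (A.comm₂ a (A.m c d y) y))).symm
      _ = A.m c (A.m a (A.m c d y) y) y := ((A.comm₂ c (A.m a (A.m c d y) y) y)).symm
      _ = A.m c y (A.m a (A.m c d y) y) := ((A.comm₁ c y (A.m a (A.m c d y) y))).symm
  have v3 : A.m a (A.m c d y) y = A.m y a (A.m a (A.m c d y) y) :=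
    calc A.m a (A.m c d y) y
        = A.m a y (A.m a (A.m c d y) y) := (A.med13 a (A.m c d y) y).symm
      _ = A.m y a (A.m a (A.m c d y) y) := A.m213 a y (A.m a (A.m c d y) y)
  have hXacy : A.m a (A.m c d y) y = A.m a c y :=
    A.Ueq a c y (A.m a (A.m c d y) y) v1 v2 v3
  exact h.trans hXacy.symm

/-- `{w | y ∈ [e,w]}` is closed under medians of its members. -/
theorem Sconveq (e w1 w2 w y : M) (h1 : y = A.m e w1 y) (h2 : y = A.m e w2 y)
    (hw : w = A.m w1 w2 w) : y = A.m e w y := by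
  have hg1 : A.m e w y = A.m w1 y (A.m e w y) :=
    calc A.m e w y = A.m w y e := (A.comm₂ e w y)
      _ = A.m (A.m w1 w2 w) y e := (A.congr_m1 y e hw)
      _ = A.m w1 (A.m w2 y e) (A.m w y e) := (A.assoc w1 w2 w y e)
      _ = A.m w1 (A.m w2 y e) (A.m e w y) := ((A.congr_m3 w1 (A.m w2 y e) (A.comm₂ e w y))).symm
      _ = A.m w1 (A.m e w2 y) (A.m e w y) := ((A.congr_m2 w1 (A.m e w y) (A.comm₂ e w2 y))).symm
      _ = A.m w1 y (A.m e w y) := ((A.congr_m2 w1 (A.m e w y) h2)).symm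
  have hg2 : A.m e w y = A.m e w1 (A.m e w y) :=
    calc A.m e w y = A.m w y e := (A.comm₂ e w y)
      _ = A.m w (A.m e w1 y) e := (A.congr_m2 w e h1)
      _ = A.m w (A.m y e w1) e := (A.congr_m2 w e ((A.comm₂ y e w1)).symm)
      _ = A.m w (A.m y e w1) (A.m e e w1) := ((A.congr_m3 w (A.m y e w1) (A.idem e w1))).symm
      _ = A.m (A.m w y e) e w1 := ((A.assoc w y e e w1)).symm
      _ = A.m (A.m e w y) e w1 := ((A.congr_m1 e w1 (A.comm₂ e w y))).symm
      _ = A.m e w1 (A.m e w y) := (((A.comm₂ (A.m e w y) e w1)).symm).symm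
  have hg3 : A.m e w y = A.m y e (A.m e w y) :=
    calc A.m e w y = A.m e y (A.m e w y) := (A.med13 e w y).symm
      _ = A.m y e (A.m e w y) := A.m213 e y (A.m e w y)
  have hG : A.m e w y = A.m y e w1 := A.Ueq y e w1 (A.m e w y) hg3 hg2 hg1
  have hy1 : y = A.m y e y := (A.mxyx y e).symm
  have hy3 : y = A.m w1 y y := (A.mxyy w1 y).symm
  have hy : y = A.m y e w1 := A.Ueq y e w1 y hy1 h1 hy3
  exact hy.trans hG.symm

/-- The key step for convexity of joins. -/
theorem Jstepeq (a c1 c2 u v z : M) (hu : u = A.m a c1 u) (hv : v = A.m a c2 v)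
    (hz : z = A.m u v z) : z = A.m a (A.m c1 c2 z) z := by
  have hv' : A.m a c2 z = A.m z v (A.m a c2 z) := A.Geq a c2 z v hv
  have hz1 : z = A.m u (A.m a c2 z) z := A.T2eq u v z (A.m a c2 z) hz hv'
  have hu' : A.m a c1 z = A.m z u (A.m a c1 z) := A.Geq a c1 z u hu
  have hz1' : z = A.m (A.m a c2 z) u z := hz1.trans (A.m213 u (A.m a c2 z) z)
  have hz2' : z = A.m (A.m a c2 z) (A.m a c1 z) z :=
    A.T2eq (A.m a c2 z) u z (A.m a c1 z) hz1' hu'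
  have hz2 : z = A.m (A.m a c1 z) (A.m a c2 z) z :=
    hz2'.trans (A.m213 (A.m a c2 z) (A.m a c1 z) z)
  have haY : z = A.m a (A.m c1 (A.m a c2 z) z) z :=
    calc z = A.m (A.m a c1 z) (A.m a c2 z) z := hz2
      _ = A.m (A.m a c1 z) z (A.m a c2 z) := (A.comm₁ (A.m a c1 z) (A.m a c2 z) z)
      _ = A.m a (A.m c1 z (A.m a c2 z)) (A.m z z (A.m a c2 z)) := (A.assoc a c1 z z (A.m a c2 z))
      _ = A.m a (A.m c1 z (A.m a c2 z)) z := (A.congr_m3 a (A.m c1 z (A.m a c2 z)) (A.idem z (A.m a c2 z)))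
      _ = A.m a (A.m c1 (A.m a c2 z) z) z := ((A.congr_m2 a z (A.comm₁ c1 (A.m a c2 z) z))).symm
  have hYaz : A.m c1 (A.m a c2 z) z = A.m a z (A.m c1 (A.m a c2 z) z) :=
    A.IconvEq a z (A.m a c2 z) z (A.m c1 (A.m a c2 z) z)
      (A.med13 a c2 z).symm (A.mxyy a z).symm (A.med23 c1 (A.m a c2 z) z).symm
  have hYz : A.m c1 (A.m a c2 z) z = z :=
    A.ASeq a z (A.m c1 (A.m a c2 z) z) hYaz haY
  calc z = A.m c1 (A.m a c2 z) z := (hYz).symm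
    _ = A.m (A.m a c2 z) z c1 := (A.comm₂ c1 (A.m a c2 z) z)
    _ = A.m a (A.m c2 z c1) (A.m z z c1) := (A.assoc a c2 z z c1)
    _ = A.m a (A.m c2 z c1) z := (A.congr_m3 a (A.m c2 z c1) (A.idem z c1))
    _ = A.m a (A.m c1 c2 z) z := ((A.congr_m2 a z (A.comm₂ c1 c2 z))).symm

/-! ### Convexity and separation -/

theorem I_conv (x y : M) : A.Conv (A.I x y) := by
  intro u hu w hw t ht
  exact A.IconvEq x y u w t hu hw ht

theorem join_conv {C : Set M} (hC : A.Conv C) (a : M) :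
    A.Conv {z | ∃ c ∈ C, z ∈ A.I a c} := by
  rintro u ⟨c1, hc1, hu⟩ v ⟨c2, hc2, hv⟩ z hz
  refine ⟨A.m c1 c2 z, hC c1 hc1 c2 hc2 (A.absEq c1 c2 z).symm, ?_⟩
  exact A.Jstepeq a c1 c2 u v z hu hv hz

theorem conv_singleton (x : M) : A.Conv ({x} : Set M) := by
  intro u hu w hw t ht
  have h1 : t = A.m u w t := ht
  have hu' : u = x := hu
  have hw' : w = x := hw
  rw [hu', hw', A.idem] at h1
  exact h1

/-- Separation of distinct points by a half space. -/
theorem separation {x y : M} (hxy : x ≠ y) :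
    ∃ H : Set M, A.Halfspace H ∧ x ∈ H ∧ y ∉ H := by
  set S : Set (Set M) := {C | A.Conv C ∧ x ∈ C ∧ y ∉ C} with hS
  have hxS : ({x} : Set M) ∈ S := ⟨A.conv_singleton x, rfl, by simpa using hxy.symm⟩
  obtain ⟨C, -, hCS, hmax⟩ := zorn_subset_nonempty S (fun c hcS hchain hcne => by
    obtain ⟨C0, hC0⟩ := hcne
    refine ⟨⋃₀ c, ⟨?_, ?_, ?_⟩, fun s hs => Set.subset_sUnion_of_mem hs⟩
    · intro u hu w hw t ht
      obtain ⟨Cu, hCu, huCu⟩ := hu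
      obtain ⟨Cw, hCw, hwCw⟩ := hw
      rcases hchain.total hCu hCw with h | h
      · exact ⟨Cw, hCw, (hcS hCw).1 u (h huCu) w hwCw ht⟩
      · exact ⟨Cu, hCu, (hcS hCu).1 u huCu w (h hwCw) ht⟩
    · exact ⟨C0, hC0, (hcS hC0).2.1⟩
    · rintro ⟨C1, hC1, hyC1⟩
      exact (hcS hC1).2.2 hyC1) {x} hxS
  obtain ⟨hCconv, hxC, hyC⟩ := hCS
  refine ⟨C, ⟨hCconv, ?_⟩, hxC, hyC⟩
  intro a ha b hb w hw
  intro hwC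
  -- the joins over a and b
  have key : ∀ p : M, p ∉ C → ∃ c ∈ C, y ∈ A.I p c := by
    intro p hp
    set J : Set M := {z | ∃ c ∈ C, z ∈ A.I p c} with hJ
    have hJconv : A.Conv J := A.join_conv hCconv p
    have hCJ : C ⊆ J := fun c hc => ⟨c, hc, (A.mxyy p c).symm⟩
    have hpJ : p ∈ J := ⟨x, hxC, (A.mxyx p x).symm⟩
    by_cases hyJ : y ∈ J
    · exact hyJ
    · exfalso
      have : J = C := le_antisymm (hmax ⟨hJconv, hCJ hxC, hyJ⟩ hCJ) hCJ
      exact hp (this ▸ hpJ)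
  obtain ⟨c, hcC, hyac⟩ := key a ha
  obtain ⟨d, hdC, hybd⟩ := key b hb
  have heC : A.m c d y ∈ C := hCconv c hcC d hdC (A.absEq c d y).symm
  have hyae : y = A.m a (A.m c d y) y := A.Veq a c d y hyac
  have hybe : y = A.m b (A.m c d y) y := by
    have := A.Veq b d c y hybd
    rwa [A.m213 d c y] at this
  have h1 : y = A.m (A.m c d y) a y := hyae.trans (A.m213 a (A.m c d y) y)
  have h2 : y = A.m (A.m c d y) b y := hybe.trans (A.m213 b (A.m c d y) y)
  have hyew : y = A.m (A.m c d y) w y := A.Sconveq (A.m c d y) a b w y h1 h2 hw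
  exact hyC (hCconv (A.m c d y) heC w hwC hyew)

/-! ### The separator sets -/

theorem mem_sep_iff {H : Set M} {x y : M} :
    H ∈ A.sep {x} {y} ↔ A.Halfspace H ∧ x ∈ H ∧ y ∉ H := by
  simp [MedianAlgebra.sep, Set.singleton_subset_iff]

theorem sep_self (x : M) : A.sep {x} {x} = ∅ := by
  ext H
  simp only [mem_sep_iff, Set.mem_empty_iff_false, iff_false]
  rintro ⟨-, hx, hx'⟩
  exact hx' hx

theorem sep_nonempty {x y : M} (hxy : x ≠ y) : (A.sep {x} {y}).Nonempty := by
  obtain ⟨H, hH, hx, hy⟩ := A.separation hxy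
  exact ⟨H, (A.mem_sep_iff).2 ⟨hH, hx, hy⟩⟩

theorem compl_halfspace {H : Set M} (h : A.Halfspace H) : A.Halfspace Hᶜ := by
  refine ⟨h.2, ?_⟩
  rw [compl_compl]
  exact h.1

theorem sep_symm_eq (x y : M) : A.sep {y} {x} = compl '' (A.sep {x} {y}) := by
  ext K
  simp only [Set.mem_image, mem_sep_iff]
  constructor
  · rintro ⟨hK, hyK, hxK⟩
    exact ⟨Kᶜ, ⟨A.compl_halfspace hK, hxK, by simp [hyK]⟩, compl_compl K⟩
  · rintro ⟨H, ⟨hH, hxH, hyH⟩, rfl⟩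
    exact ⟨A.compl_halfspace hH, hyH, by simp [hxH]⟩

theorem sep_split {x y z : M} (hz : z ∈ A.I x y) :
    A.sep {x} {y} = A.sep {x} {z} ∪ A.sep {z} {y} ∧
      Disjoint (A.sep {x} {z}) (A.sep {z} {y}) := by
  constructor
  · ext H
    simp only [Set.mem_union, mem_sep_iff]
    constructor
    · rintro ⟨hH, hxH, hyH⟩
      by_cases hzH : z ∈ H
      · exact Or.inr ⟨hH, hzH, hyH⟩
      · exact Or.inl ⟨hH, hxH, hzH⟩
    · rintro (⟨hH, hxH, hzH⟩ | ⟨hH, hzH, hyH⟩)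
      · refine ⟨hH, hxH, fun hyH => hzH ?_⟩
        exact hH.1 x hxH y hyH hz
      · refine ⟨hH, ?_, hyH⟩
        by_contra hxH
        exact (hH.2 x hxH y hyH hz) hzH
  · rw [Set.disjoint_left]
    intro H h1 h2
    exact ((A.mem_sep_iff).1 h1).2.2 ((A.mem_sep_iff).1 h2).2.1

theorem adj_sep_char {u v : M} (h : A.Adj u v) {H : Set M}
    (hH : H ∈ A.sep {u} {v}) : H = {w | A.m u v w = u} := by
  obtain ⟨hHf, huH, hvH⟩ := (A.mem_sep_iff).1 hH
  ext w
  simp only [Set.mem_setOf_eq]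
  constructor
  · intro hwH
    have hp : A.m u v w ∈ A.I u v := (A.absEq u v w).symm
    rw [h.2] at hp
    rcases hp with hp | hp
    · exact hp.symm ▸ hp
    · exfalso
      have hpuw : A.m u v w ∈ A.I u w := (A.med13 u v w).symm
      have : A.m u v w ∈ H := hHf.1 u huH w hwH hpuw
      rw [hp] at this
      exact hvH this
  · intro hpu
    by_contra hwH
    have hpvw : A.m u v w ∈ A.I v w := (A.med23 u v w).symm
    have : A.m u v w ∈ Hᶜ := hHf.2 v hvH w hwH hpvw
    rw [hpu] at this
    exact this huH

theorem adj_sep_subsingleton {u v : M} (h : A.Adj u v) :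
    (A.sep {u} {v}).Subsingleton := by
  intro H1 h1 H2 h2
  rw [A.adj_sep_char h h1, A.adj_sep_char h h2]

theorem adj_ncard_le_one {u v : M} (h : A.Adj u v) :
    (A.sep {u} {v}).ncard ≤ 1 := by
  rcases (A.adj_sep_subsingleton h).eq_empty_or_singleton with h' | ⟨a, h'⟩
  · simp [h']
  · simp [h']

/-! ### The metric -/

theorem sep_ncard_eq_zero_iff (hdisc : ∀ x y : M, (A.sep {x} {y}).Finite) (x y : M) :
    (A.sep {x} {y}).ncard = 0 ↔ x = y := by
  constructor
  · intro h
    by_contra hxy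
    have := (Set.ncard_pos (hdisc x y)).2 (A.sep_nonempty hxy)
    omega
  · rintro rfl
    rw [A.sep_self]
    exact Set.ncard_empty _

theorem sep_symm_ncard (x y : M) :
    (A.sep {x} {y}).ncard = (A.sep {y} {x}).ncard := by
  rw [A.sep_symm_eq y x, Set.ncard_image_of_injective _ compl_injective]

theorem sep_triangle (hdisc : ∀ x y : M, (A.sep {x} {y}).Finite) (x y z : M) :
    (A.sep {x} {z}).ncard ≤ (A.sep {x} {y}).ncard + (A.sep {y} {z}).ncard := by
  have hsub : A.sep {x} {z} ⊆ A.sep {x} {y} ∪ A.sep {y} {z} := by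
    intro H hH
    obtain ⟨hHf, hx, hz⟩ := (A.mem_sep_iff).1 hH
    by_cases hy : y ∈ H
    · exact Or.inr ((A.mem_sep_iff).2 ⟨hHf, hy, hz⟩)
    · exact Or.inl ((A.mem_sep_iff).2 ⟨hHf, hx, hy⟩)
  calc (A.sep {x} {z}).ncard ≤ (A.sep {x} {y} ∪ A.sep {y} {z}).ncard :=
        Set.ncard_le_ncard hsub ((hdisc x y).union (hdisc y z))
    _ ≤ (A.sep {x} {y}).ncard + (A.sep {y} {z}).ncard := Set.ncard_union_le _ _

theorem sep_add (hdisc : ∀ x y : M, (A.sep {x} {y}).Finite) {x y z : M}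
    (hz : z ∈ A.I x y) :
    (A.sep {x} {y}).ncard = (A.sep {x} {z}).ncard + (A.sep {z} {y}).ncard := by
  obtain ⟨hU, hD⟩ := A.sep_split hz
  rw [hU, Set.ncard_union_eq hD (hdisc x z) (hdisc z y)]

theorem sep_one_le (hdisc : ∀ x y : M, (A.sep {x} {y}).Finite) {x y : M}
    (h : x ≠ y) : 1 ≤ (A.sep {x} {y}).ncard :=
  (Set.ncard_pos (hdisc x y)).2 (A.sep_nonempty h)

theorem exists_adj_step (hdisc : ∀ x y : M, (A.sep {x} {y}).Finite) {x y : M}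
    (hxy : x ≠ y) :
    ∃ x', A.Adj x x' ∧ x' ∈ A.I x y ∧ (A.sep {x} {x'}).ncard = 1 := by
  set T : Set M := A.I x y \ {x} with hT
  have hyT : y ∈ T := ⟨(A.mxyy x y).symm, hxy.symm⟩
  set N : Set ℕ := (fun z => (A.sep {x} {z}).ncard) '' T with hN
  have hNne : N.Nonempty := ⟨_, ⟨y, hyT, rfl⟩⟩
  obtain ⟨x', hx'T, hx'eq⟩ := Nat.sInf_mem hNne
  have hx'inf : (A.sep {x} {x'}).ncard = sInf N := hx'eq
  have hxx' : x ≠ x' := fun h => hx'T.2 h.symm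
  have hadj : A.Adj x x' := by
    refine ⟨hxx', ?_⟩
    apply Set.Subset.antisymm
    · intro t ht
      by_contra htx
      rw [Set.mem_insert_iff, Set.mem_singleton_iff] at htx
      push_neg at htx
      obtain ⟨ht1, ht2⟩ := htx
      have htI : t ∈ A.I x y := A.transIeq x y x' t hx'T.1 ht
      have htT : t ∈ T := ⟨htI, ht1⟩
      have hle : sInf N ≤ (A.sep {x} {t}).ncard := Nat.sInf_le ⟨t, htT, rfl⟩
      have hsplit : (A.sep {x} {x'}).ncard =
          (A.sep {x} {t}).ncard + (A.sep {t} {x'}).ncard := A.sep_add hdisc ht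
      have hpos : 1 ≤ (A.sep {t} {x'}).ncard := A.sep_one_le hdisc ht2
      omega
    · rintro t (rfl | rfl)
      · exact (A.mxyx t x').symm
      · exact (A.mxyy x t).symm
  refine ⟨x', hadj, hx'T.1, ?_⟩
  exact le_antisymm (A.adj_ncard_le_one hadj) (A.sep_one_le hdisc hxx')

theorem exists_path (hdisc : ∀ x y : M, (A.sep {x} {y}).Finite) :
    ∀ n : ℕ, ∀ x y : M, (A.sep {x} {y}).ncard = n →
    ∃ f : ℕ → M, f 0 = x ∧ f n = y ∧ ∀ i < n, A.Adj (f i) (f (i + 1)) := by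
  intro n
  induction n using Nat.strong_induction_on with
  | _ n ih =>
    intro x y hn
    rcases eq_or_ne x y with rfl | hxy
    · have hn0 : n = 0 := by rw [← hn, A.sep_self]; exact Set.ncard_empty _
      subst hn0
      exact ⟨fun _ => x, rfl, rfl, fun i hi => absurd hi (by omega)⟩
    · obtain ⟨x', hadj, hx'I, hone⟩ := A.exists_adj_step hdisc hxy
      have hsplit := A.sep_add hdisc hx'I
      have hlt : (A.sep {x'} {y}).ncard < n := by omega
      obtain ⟨g, hg0, hgn, hgadj⟩ := ih _ hlt x' y rfl
      have hnk : n = (A.sep {x'} {y}).ncard + 1 := by omega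
      refine ⟨fun i => if i = 0 then x else g (i - 1), by simp, ?_, ?_⟩
      · have hn0 : n ≠ 0 := by omega
        simp only [hn0, if_false]
        have : n - 1 = (A.sep {x'} {y}).ncard := by omega
        rw [this]
        exact hgn
      · intro i hi
        rcases Nat.eq_zero_or_pos i with rfl | hip
        · show A.Adj (if (0:ℕ) = 0 then x else g (0 - 1))
            (if (0:ℕ) + 1 = 0 then x else g (0 + 1 - 1))
          simp only [if_pos rfl, if_neg (by omega : (0:ℕ) + 1 ≠ 0)]
          show A.Adj x (g 0)
          rw [hg0]
          exact hadj
        · show A.Adj (if i = 0 then x else g (i - 1))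
            (if i + 1 = 0 then x else g (i + 1 - 1))
          rw [if_neg (by omega : i ≠ 0), if_neg (by omega : i + 1 ≠ 0)]
          have hstep := hgadj (i - 1) (by omega)
          have e1 : i - 1 + 1 = i := by omega
          rw [e1] at hstep
          have e2 : i + 1 - 1 = i := by omega
          rw [e2]
          exact hstep

theorem path_lower (hdisc : ∀ x y : M, (A.sep {x} {y}).Finite) :
    ∀ n : ℕ, ∀ f : ℕ → M, (∀ i < n, A.Adj (f i) (f (i + 1))) →
    (A.sep {f 0} {f n}).ncard ≤ n := by
  intro n
  induction n with
  | zero =>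
    intro f _
    rw [A.sep_self]
    simp
  | succ n ih =>
    intro f hadj
    have h1 : (A.sep {f 0} {f n}).ncard ≤ n := ih f (fun i hi => hadj i (by omega))
    have h2 : (A.sep {f n} {f (n + 1)}).ncard ≤ 1 :=
      A.adj_ncard_le_one (hadj n (by omega))
    have h3 := A.sep_triangle hdisc (f 0) (f n) (f (n + 1))
    omega

end MedianAlgebra

/-- In a discrete median algebra, `d(x,y) = |Δ(x,y)|` is a metric agreeing with the
path metric of the median graph. -/
theorem discrete_metric_eq_path_metric {M : Type*} (A : MedianAlgebra M)
    (hdisc : ∀ x y : M, (A.sep {x} {y}).Finite) :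
    (∀ x y : M, (A.sep {x} {y}).ncard = 0 ↔ x = y) ∧
    (∀ x y : M, (A.sep {x} {y}).ncard = (A.sep {y} {x}).ncard) ∧
    (∀ x y z : M, (A.sep {x} {z}).ncard ≤ (A.sep {x} {y}).ncard + (A.sep {y} {z}).ncard) ∧
    (∀ x y : M, IsLeast
      {n : ℕ | ∃ f : ℕ → M, f 0 = x ∧ f n = y ∧ ∀ i < n, A.Adj (f i) (f (i + 1))}
      (A.sep {x} {y}).ncard) := by
  refine ⟨A.sep_ncard_eq_zero_iff hdisc, A.sep_symm_ncard, A.sep_triangle hdisc, ?_⟩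
  intro x y
  constructor
  · exact A.exists_path hdisc _ x y rfl
  · rintro n ⟨f, hf0, hfn, hfadj⟩
    have := A.path_lower hdisc n f hfadj
    rwa [hf0, hfn] at this
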